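/- arXiv:2001.04870 — 6 statements merged into one kernel-verified Lean document; each statement's English description precedes it below -/
import Mathlib

section
/- Let G₁=(V₁,E₁) and G₂=(V₂,E₂) be vertex-disjoint finite simple graphs with V₁ and V₂ both nonempty. Then the independent neighborhood polynomial of their join satisfies N^{(i)}(G₁ + G₂, x) = I(G₁, x) + I(G₂, x) − 1, where I denotes the independence polynomial. -/
open Finset Polynomial

open scoped Classical in
/-- The neighborhood complex of `G`: all finite vertex subsets contained in the open
neighborhood of some vertex. -/
noncomputable def nhdComplex {V : Type*} [Fintype V] (G : SimpleGraph V) : Finset (Finset V) :=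
  Finset.univ.filter (fun A => ∃ v : V, (A : Set V) ⊆ G.neighborSet v)

open scoped Classical in
/-- The independent neighborhood polynomial of `G`. -/
noncomputable def indNbhdPoly {V : Type*} [Fintype V] (G : SimpleGraph V) : Polynomial ℤ :=
  ∑ A ∈ (nhdComplex G).filter (fun A => ∀ u ∈ A, ∀ w ∈ A, ¬ G.Adj u w), X ^ A.card

open scoped Classical in
/-- The independence polynomial of `G`: the generating function of the independent
vertex subsets of `G` (including the empty set). -/
noncomputable def indepPoly {V : Type*} [Fintype V] (G : SimpleGraph V) : Polynomial ℤ :=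
  ∑ A ∈ Finset.univ.filter (fun A : Finset V => ∀ u ∈ A, ∀ w ∈ A, ¬ G.Adj u w), X ^ A.card

/-- The join of two vertex-disjoint graphs: their disjoint union together with all
edges joining vertices of the first to vertices of the second. -/
def SimpleGraph.graphJoin {V₁ V₂ : Type*} (G₁ : SimpleGraph V₁) (G₂ : SimpleGraph V₂) :
    SimpleGraph (V₁ ⊕ V₂) :=
  (G₁ ⊕g G₂) ⊔ completeBipartiteGraph V₁ V₂

private lemma fext {α : Type*} (p : α → Prop) (h₁ h₂ : DecidablePred p) (s : Finset α) :
    @Finset.filter α p h₁ s = @Finset.filter α p h₂ s :=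
  congrArg (fun h => @Finset.filter α p h s) (Subsingleton.elim _ _)

set_option maxHeartbeats 8000000 in
/-- The independent neighborhood polynomial of the join of two nonempty graphs is
`I(G₁,x) + I(G₂,x) - 1`, where `I` denotes the independence polynomial. -/
theorem indNbhdPoly_join {V₁ V₂ : Type*} [Fintype V₁] [Fintype V₂]
    [Nonempty V₁] [Nonempty V₂] (G₁ : SimpleGraph V₁) (G₂ : SimpleGraph V₂) :
    indNbhdPoly (G₁.graphJoin G₂) = indepPoly G₁ + indepPoly G₂ - 1 := by
  classical
  have adj_ll : ∀ a b : V₁, (G₁.graphJoin G₂).Adj (.inl a) (.inl b) ↔ G₁.Adj a b := by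
    intro a b; simp [SimpleGraph.graphJoin]
  have adj_rr : ∀ a b : V₂, (G₁.graphJoin G₂).Adj (.inr a) (.inr b) ↔ G₂.Adj a b := by
    intro a b; simp [SimpleGraph.graphJoin]
  have adj_lr : ∀ (a : V₁) (b : V₂), (G₁.graphJoin G₂).Adj (.inl a) (.inr b) := by
    intro a b; simp [SimpleGraph.graphJoin]
  set e₁ : Finset V₁ ↪ Finset (V₁ ⊕ V₂) :=
    (Finset.mapEmbedding ⟨Sum.inl, Sum.inl_injective⟩).toEmbedding with he₁
  set e₂ : Finset V₂ ↪ Finset (V₁ ⊕ V₂) :=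
    (Finset.mapEmbedding ⟨Sum.inr, Sum.inr_injective⟩).toEmbedding with he₂
  let T₁ : Finset (Finset V₁) :=
    @Finset.filter _ (fun A : Finset V₁ => ∀ u ∈ A, ∀ w ∈ A, ¬ G₁.Adj u w)
      (fun a => Classical.propDecidable _) Finset.univ
  let T₂ : Finset (Finset V₂) :=
    @Finset.filter _ (fun A : Finset V₂ => ∀ u ∈ A, ∀ w ∈ A, ¬ G₂.Adj u w)
      (fun a => Classical.propDecidable _) Finset.univ
  have key : @Finset.filter _
      (fun A => ∀ u ∈ A, ∀ w ∈ A, ¬ (G₁.graphJoin G₂).Adj u w)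
      (fun a => Classical.propDecidable _)
      (nhdComplex (G₁.graphJoin G₂)) = T₁.map e₁ ∪ T₂.map e₂ := by
    ext A
    simp only [Finset.mem_union, Finset.mem_map, Finset.mem_filter, nhdComplex,
      Finset.mem_univ, true_and, T₁, T₂, he₁, he₂, RelEmbedding.coe_toEmbedding,
      Finset.mapEmbedding_apply]
    constructor
    · rintro ⟨-, hind⟩
      by_cases hL : ∀ x ∈ A, Sum.isLeft x
      · left
        have : A ⊆ Finset.univ.map ⟨Sum.inl, Sum.inl_injective⟩ := by
          intro x hx
          obtain ⟨a, rfl⟩ := Sum.isLeft_iff.mp (hL x hx)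
          simp
        obtain ⟨B, -, rfl⟩ := Finset.subset_map_iff.mp this
        refine ⟨B, fun u hu w hw h => ?_, rfl⟩
        exact hind _ (Finset.mem_map_of_mem _ hu) _ (Finset.mem_map_of_mem _ hw)
          ((adj_ll u w).mpr h)
      · right
        push_neg at hL
        obtain ⟨x, hx, hxl⟩ := hL
        obtain ⟨b₀, rfl⟩ := Sum.isRight_iff.mp (Sum.not_isLeft.mp hxl)
        have : A ⊆ Finset.univ.map ⟨Sum.inr, Sum.inr_injective⟩ := by
          intro y hy
          rcases y with a | b
          · exact absurd (((G₁.graphJoin G₂).adj_symm (adj_lr a b₀)))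
              (hind _ hx _ hy)
          · simp
        obtain ⟨B, -, rfl⟩ := Finset.subset_map_iff.mp this
        refine ⟨B, fun u hu w hw h => ?_, rfl⟩
        exact hind _ (Finset.mem_map_of_mem _ hu) _ (Finset.mem_map_of_mem _ hw)
          ((adj_rr u w).mpr h)
    · rintro (⟨B, hB, rfl⟩ | ⟨B, hB, rfl⟩)
      · obtain ⟨w⟩ := ‹Nonempty V₂›
        refine ⟨⟨Sum.inr w, ?_⟩, ?_⟩
        · intro x hx
          simp only [Finset.coe_map, Set.mem_image, Finset.mem_coe] at hx
          obtain ⟨a, -, rfl⟩ := hx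
          exact (G₁.graphJoin G₂).adj_symm (adj_lr a w)
        · intro u hu v hv
          simp only [Finset.mem_map, Function.Embedding.coeFn_mk] at hu hv
          obtain ⟨a, ha, rfl⟩ := hu
          obtain ⟨b, hb, rfl⟩ := hv
          exact fun h => hB a ha b hb ((adj_ll a b).mp h)
      · obtain ⟨w⟩ := ‹Nonempty V₁›
        refine ⟨⟨Sum.inl w, ?_⟩, ?_⟩
        · intro x hx
          simp only [Finset.coe_map, Set.mem_image, Finset.mem_coe] at hx
          obtain ⟨a, -, rfl⟩ := hx
          exact adj_lr w a
        · intro u hu v hv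
          simp only [Finset.mem_map, Function.Embedding.coeFn_mk] at hu hv
          obtain ⟨a, ha, rfl⟩ := hu
          obtain ⟨b, hb, rfl⟩ := hv
          exact fun h => hB a ha b hb ((adj_rr a b).mp h)
  have inter : T₁.map e₁ ∩ T₂.map e₂ = {(∅ : Finset (V₁ ⊕ V₂))} := by
    ext A
    simp only [Finset.mem_inter, Finset.mem_map, Finset.mem_singleton, he₁, he₂,
      RelEmbedding.coe_toEmbedding, Finset.mapEmbedding_apply]
    constructor
    · rintro ⟨⟨B₁, -, rfl⟩, ⟨B₂, -, hB₂⟩⟩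
      rw [Finset.eq_empty_iff_forall_notMem]
      intro x hx
      have hx2 := hx
      rw [← hB₂] at hx2
      simp only [Finset.mem_map, Function.Embedding.coeFn_mk] at hx hx2
      obtain ⟨a, -, rfl⟩ := hx
      obtain ⟨b, -, hb⟩ := hx2
      exact Sum.inr_ne_inl hb
    · rintro rfl
      refine ⟨⟨∅, ?_, by simp⟩, ⟨∅, ?_, by simp⟩⟩ <;> simp [T₁, T₂]
  have hui := Finset.sum_union_inter (s₁ := Finset.map e₁ T₁) (s₂ := Finset.map e₂ T₂)
    (f := fun A : Finset (V₁ ⊕ V₂) => (X : Polynomial ℤ) ^ A.card)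
  rw [inter] at hui
  simp only [Finset.sum_singleton, Finset.card_empty, pow_zero] at hui
  have final : (∑ A ∈ @Finset.filter _
        (fun A => ∀ u ∈ A, ∀ w ∈ A, ¬ (G₁.graphJoin G₂).Adj u w)
        (fun a => Classical.propDecidable _)
        (nhdComplex (G₁.graphJoin G₂)),
        (X : Polynomial ℤ) ^ A.card)
      = (∑ A ∈ T₁, (X : Polynomial ℤ) ^ A.card)
        + (∑ A ∈ T₂, (X : Polynomial ℤ) ^ A.card) - 1 := by
    rw [key, eq_sub_of_add_eq hui, Finset.sum_map, Finset.sum_map]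
    simp only [he₁, he₂, RelEmbedding.coe_toEmbedding, Finset.mapEmbedding_apply,
      Finset.card_map]
  rw [indNbhdPoly, indepPoly, indepPoly]
  refine Eq.trans (Finset.sum_congr ?_ fun _ _ => rfl) (final.trans ?_)
  · apply fext
  refine congrArg (fun q => q - 1) ?_
  refine congrArg₂ (· + ·) ?_ ?_ <;>
    refine Finset.sum_congr ?_ fun _ _ => rfl <;> apply fext
end

section
/- Let G₁=(V₁,E₁) and G₂=(V₂,E₂) be vertex-disjoint finite simple graphs with V₁ and V₂ both nonempty. Then the independent neighborhood polynomial of their join equals the independence polynomial of their join: N^{(i)}(G₁ + G₂, x) = I(G₁ + G₂, x). Equivalently, every independent set of G₁ + G₂ is contained in the open neighborhood of some vertex of G₁ + G₂. -/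
open Finset Polynomial

/-- The independent neighborhood polynomial of the join of two nonempty graphs equals
the independence polynomial of the join. -/
theorem indNbhdPoly_join_eq_indepPoly {V₁ V₂ : Type*} [Fintype V₁] [Fintype V₂]
    [Nonempty V₁] [Nonempty V₂] (G₁ : SimpleGraph V₁) (G₂ : SimpleGraph V₂) :
    indNbhdPoly (G₁.graphJoin G₂) = indepPoly (G₁.graphJoin G₂) := by
  classical
  have adj_lr : ∀ (a : V₁) (b : V₂), (G₁.graphJoin G₂).Adj (Sum.inl a) (Sum.inr b) := by
    intro a b
    exact Or.inr (by simp)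
  have key : ∀ A : Finset (V₁ ⊕ V₂),
      (∀ u ∈ A, ∀ w ∈ A, ¬ (G₁.graphJoin G₂).Adj u w) →
      ∃ v, (A : Set (V₁ ⊕ V₂)) ⊆ (G₁.graphJoin G₂).neighborSet v := by
    intro A hA
    by_cases hl : ∃ a : V₁, Sum.inl a ∈ A
    · obtain ⟨a, ha⟩ := hl
      obtain ⟨b⟩ := ‹Nonempty V₂›
      refine ⟨Sum.inr b, ?_⟩
      intro u hu
      rw [Finset.mem_coe] at hu
      rcases u with u | u
      · exact (adj_lr u b).symm
      · exact absurd (adj_lr a u) (hA _ ha _ hu)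
    · push_neg at hl
      obtain ⟨a⟩ := ‹Nonempty V₁›
      refine ⟨Sum.inl a, ?_⟩
      intro u hu
      rw [Finset.mem_coe] at hu
      rcases u with u | u
      · exact absurd hu (hl u)
      · exact adj_lr a u
  unfold indNbhdPoly indepPoly nhdComplex
  rw [Finset.filter_filter]
  refine Finset.sum_congr ?_ (fun _ _ => rfl)
  ext A
  simp only [Finset.mem_filter, Finset.mem_univ, true_and]
  exact ⟨fun h => h.2, fun h => ⟨key A h, h⟩⟩
end

section
/- Let G=(V,E) be a finite simple graph and r a positive integer, and let exp(G,r) be the r-expansion of G. Then N^{(i)}(exp(G,r), x) = N^{(i)}(G, (1+x)^r − 1), i.e., the independent neighborhood polynomial of exp(G,r) is obtained from that of G by substituting (1+x)^r − 1 for the variable. -/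
open Finset Polynomial

/-- The `r`-expansion of `G`: every vertex is replaced by an independent set of size `r`
and every edge by a complete bipartite graph `K_{r,r}` between the corresponding sets. -/
def SimpleGraph.expansion {V : Type*} (G : SimpleGraph V) (r : ℕ) :
    SimpleGraph (V × Fin r) where
  Adj x y := G.Adj x.1 y.1
  symm := ⟨fun x y h => G.adj_symm h⟩
  loopless := ⟨fun x h => G.irrefl h⟩

set_option maxHeartbeats 1000000

section Aux

variable {V : Type*} [Fintype V] (G : SimpleGraph V)

open scoped Classical in
lemma aux_sum_all_subsets (r : ℕ) :
    ∑ S : Finset (Fin r), (X : Polynomial ℤ) ^ S.card = (1 + X) ^ r := by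
  have h := Finset.prod_add (fun _ : Fin r => (X : Polynomial ℤ)) (fun _ => (1 : Polynomial ℤ))
    Finset.univ
  simp only [Finset.prod_const, one_pow, mul_one, Finset.powerset_univ,
    Finset.card_univ, Fintype.card_fin] at h
  rw [add_comm, ← h]

open scoped Classical in
lemma aux_sum_nonempty_subsets (r : ℕ) :
    ∑ S ∈ Finset.univ.filter (fun S : Finset (Fin r) => S ≠ ∅), (X : Polynomial ℤ) ^ S.card
      = (1 + X) ^ r - 1 := by
  have h := aux_sum_all_subsets r
  rw [← Finset.sum_filter_add_sum_filter_not Finset.univ (fun S : Finset (Fin r) => S ≠ ∅)] at h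
  have h2 : Finset.univ.filter (fun S : Finset (Fin r) => ¬ S ≠ ∅) = {∅} := by
    ext S; simp
  rw [h2] at h
  simp only [Finset.sum_singleton, Finset.card_empty, pow_zero] at h
  linear_combination h

end Aux



open scoped Classical in
/-- The independent neighborhood polynomial of the `r`-expansion of `G` is obtained from
that of `G` by substituting `(1+x)^r - 1` for the variable. -/
theorem indNbhdPoly_expansion {V : Type*} [Fintype V] (G : SimpleGraph V)
    (r : ℕ) (hr : 0 < r) :
    indNbhdPoly (G.expansion r) = (indNbhdPoly G).comp ((1 + X) ^ r - 1) := by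
  set q : Polynomial ℤ := (1 + X) ^ r - 1 with hq
  set supp : (V → Finset (Fin r)) → Finset V :=
    fun f => Finset.univ.filter (fun v => f v ≠ ∅) with hsupp
  set goodG : Finset (Finset V) :=
    (nhdComplex G).filter (fun A => ∀ u ∈ A, ∀ w ∈ A, ¬ G.Adj u w) with hgoodG
  have hsuppF : ∀ B : Finset (V × Fin r),
      supp (fun v => Finset.univ.filter (fun i => (v, i) ∈ B)) = B.image Prod.fst := by
    intro B
    ext v
    simp [hsupp, Finset.filter_eq_empty_iff, Finset.eq_empty_iff_forall_notMem]
  have hmem : ∀ B : Finset (V × Fin r),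
      ((∃ x : V × Fin r, (B : Set (V × Fin r)) ⊆ (G.expansion r).neighborSet x) ∧
        ∀ u ∈ B, ∀ w ∈ B, ¬ (G.expansion r).Adj u w)
      ↔ ((∃ v : V, ((B.image Prod.fst : Finset V) : Set V) ⊆ G.neighborSet v) ∧
        ∀ u ∈ B.image Prod.fst, ∀ w ∈ B.image Prod.fst, ¬ G.Adj u w) := by
    intro B
    constructor
    · rintro ⟨⟨x, hx⟩, hind⟩
      refine ⟨⟨x.1, ?_⟩, ?_⟩
      · intro u hu
        simp only [Finset.coe_image, Set.mem_image, Finset.mem_coe] at hu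
        obtain ⟨p, hp, rfl⟩ := hu
        exact hx hp
      · intro u hu w hw
        simp only [Finset.mem_image] at hu hw
        obtain ⟨p, hp, rfl⟩ := hu
        obtain ⟨s, hs, rfl⟩ := hw
        exact hind p hp s hs
    · rintro ⟨⟨v, hv⟩, hind⟩
      refine ⟨⟨(v, ⟨0, hr⟩), ?_⟩, ?_⟩
      · intro p hp
        exact hv (by simp [Finset.coe_image]; exact ⟨p.2, hp⟩)
      · intro p hp s hs
        exact hind p.1 (Finset.mem_image_of_mem _ hp) s.1 (Finset.mem_image_of_mem _ hs)
  have hBF : ∀ f : V → Finset (Fin r),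
      (Finset.univ.filter (fun p : V × Fin r => p.2 ∈ f p.1)).image Prod.fst = supp f := by
    intro f
    ext v
    simp [hsupp, Finset.eq_empty_iff_forall_notMem]
  have hcard : ∀ B : Finset (V × Fin r),
      B.card = ∑ v, (Finset.univ.filter (fun i => (v, i) ∈ B)).card := by
    intro B
    have h1 : B.card = ∑ p : V × Fin r, if p ∈ B then 1 else 0 := by
      rw [← Finset.card_filter]
      congr 1
      ext p
      simp
    rw [h1, Fintype.sum_prod_type]
    simp only [Finset.card_filter]
  have step1 : indNbhdPoly (G.expansion r)
      = ∑ f ∈ Finset.univ.filter (fun f : V → Finset (Fin r) => supp f ∈ goodG),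
          (X : Polynomial ℤ) ^ (∑ v, (f v).card) := by
    rw [indNbhdPoly]
    refine Finset.sum_nbij' (fun B => fun v => Finset.univ.filter (fun i => (v, i) ∈ B))
      (fun f => Finset.univ.filter (fun p : V × Fin r => p.2 ∈ f p.1)) ?_ ?_ ?_ ?_ ?_
    · intro B hB
      simp only [nhdComplex, Finset.mem_filter, Finset.mem_univ, true_and] at hB
      simp only [Finset.mem_filter, Finset.mem_univ, true_and]
      rw [hsuppF, hgoodG]
      simp only [nhdComplex, Finset.mem_filter, Finset.mem_univ, true_and]
      exact (hmem B).mp hB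
    · intro f hf
      simp only [Finset.mem_filter, Finset.mem_univ, true_and, hgoodG] at hf
      rw [← hBF f] at hf
      simp only [nhdComplex, Finset.mem_filter, Finset.mem_univ, true_and] at hf
      have h2 := (hmem _).mpr hf
      simp only [nhdComplex, Finset.mem_filter, Finset.mem_univ, true_and]
      exact ⟨h2.1, fun u hu w hw => h2.2 u
        (Finset.mem_filter.mpr ⟨Finset.mem_univ _, hu⟩) w
        (Finset.mem_filter.mpr ⟨Finset.mem_univ _, hw⟩)⟩
    · intro B hB
      ext p
      simp
    · intro f hf
      funext v
      ext i
      simp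
    · intro B hB
      exact congrArg (X ^ ·) (hcard B)
  have step2 : ∑ f ∈ Finset.univ.filter (fun f : V → Finset (Fin r) => supp f ∈ goodG),
        (X : Polynomial ℤ) ^ (∑ v, (f v).card)
      = ∑ A ∈ goodG, ∑ f ∈ Finset.univ.filter (fun f : V → Finset (Fin r) => supp f = A),
          (X : Polynomial ℤ) ^ (∑ v, (f v).card) := by
    rw [← Finset.sum_fiberwise_of_maps_to (g := supp) (t := goodG)
      (fun f hf => (Finset.mem_filter.mp hf).2)
      (fun f => (X : Polynomial ℤ) ^ (∑ v, (f v).card))]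
    refine Finset.sum_congr rfl fun A hA => Finset.sum_congr ?_ fun _ _ => rfl
    ext f
    simp only [Finset.mem_filter, Finset.mem_univ, true_and]
    exact ⟨fun h => h.2, fun h => ⟨h ▸ hA, h⟩⟩
  have hq1 : ∑ S ∈ Finset.univ.filter (fun S : Finset (Fin r) => S ≠ ∅),
      (X : Polynomial ℤ) ^ S.card = q := by
    rw [hq]; exact aux_sum_nonempty_subsets r
  have step3 : ∀ A : Finset V,
      ∑ f ∈ Finset.univ.filter (fun f : V → Finset (Fin r) => supp f = A),
        (X : Polynomial ℤ) ^ (∑ v, (f v).card) = q ^ A.card := by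
    intro A
    have hset : Finset.univ.filter (fun f : V → Finset (Fin r) => supp f = A)
        = Fintype.piFinset (fun v => if v ∈ A then
            Finset.univ.filter (fun S : Finset (Fin r) => S ≠ ∅) else {∅}) := by
      ext f
      simp only [Finset.mem_filter, Finset.mem_univ, true_and, Fintype.mem_piFinset]
      constructor
      · rintro rfl v
        by_cases hv : v ∈ supp f
        · simp only [hv, if_true, Finset.mem_filter, Finset.mem_univ, true_and]
          simp only [hsupp, Finset.mem_filter, Finset.mem_univ, true_and] at hv
          exact hv
        · simp only [hv, if_false, Finset.mem_singleton]
          simp only [hsupp, Finset.mem_filter, Finset.mem_univ, true_and, not_not] at hv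
          exact hv
      · intro h
        ext v
        specialize h v
        by_cases hv : v ∈ A
        · simp only [hv, if_true, Finset.mem_filter, Finset.mem_univ, true_and] at h
          simp [hsupp, hv, h]
        · simp only [hv, if_false, Finset.mem_singleton] at h
          simp [hsupp, hv, h]
    rw [hset]
    have hXpow : ∀ f : V → Finset (Fin r),
        (X : Polynomial ℤ) ^ (∑ v, (f v).card) = ∏ v, (X : Polynomial ℤ) ^ (f v).card :=
      fun f => (Finset.prod_pow_eq_pow_sum _ _ _).symm
    simp_rw [hXpow]
    rw [← Finset.prod_univ_sum (fun v => if v ∈ A then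
        Finset.univ.filter (fun S : Finset (Fin r) => S ≠ ∅) else {∅})
      (fun _ S => (X : Polynomial ℤ) ^ S.card)]
    have hfac : ∀ v : V, (∑ S ∈ (if v ∈ A then
          Finset.univ.filter (fun S : Finset (Fin r) => S ≠ ∅) else {∅}),
          (X : Polynomial ℤ) ^ S.card) = if v ∈ A then q else 1 := by
      intro v
      by_cases hv : v ∈ A
      · simp only [hv, if_true]; exact hq1
      · simp only [hv, if_false]; simp
    simp_rw [hfac]
    rw [Finset.prod_ite_mem, Finset.univ_inter, Finset.prod_const]
  have final : indNbhdPoly (G.expansion r) = (indNbhdPoly G).comp q := by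
    calc indNbhdPoly (G.expansion r)
        = ∑ A ∈ goodG, q ^ A.card := by
          rw [step1, step2]; exact Finset.sum_congr rfl fun A _ => step3 A
      _ = (indNbhdPoly G).comp q := by
          rw [indNbhdPoly, Polynomial.sum_comp]
          refine Finset.sum_congr ?_ fun A _ => by
            rw [Polynomial.pow_comp, Polynomial.X_comp]
          rw [hgoodG]
  exact final
end

section
/- If G is a tree of order n ≥ 2 (a connected acyclic finite simple graph on n vertices), then the connected neighborhood polynomial of G is N^{(c)}(G,x) = 1 + n·x. -/
open Finset Polynomial

open scoped Classical in
/-- The connected neighborhood polynomial of `G`: the generating function of the members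
of the neighborhood complex inducing a connected subgraph (empty set included). -/
noncomputable def connNbhdPoly {V : Type*} [Fintype V] (G : SimpleGraph V) : Polynomial ℤ :=
  ∑ A ∈ (nhdComplex G).filter
      (fun (A : Finset V) => A = ∅ ∨ (G.induce (A : Set V)).Connected), X ^ A.card

/-- If `G` is a tree of order `n ≥ 2`, then its connected neighborhood polynomial is
`1 + n·x`. -/
theorem connNbhdPoly_of_isTree {V : Type*} [Fintype V] (G : SimpleGraph V) (n : ℕ)
    (hcard : Fintype.card V = n) (hn : 2 ≤ n) (hG : G.IsTree) :
    connNbhdPoly G = 1 + (n : Polynomial ℤ) * X := by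
  classical
  subst hcard
  have hconn := hG.isConnected
  have hac := hG.IsAcyclic
  -- no triangles
  have htri : ∀ a b c : V, G.Adj a b → G.Adj b c → G.Adj c a → False := by
    intro a b c hab hbc hca
    have hq : (SimpleGraph.Walk.cons hbc (SimpleGraph.Walk.cons hca .nil)).IsPath := by
      simp [SimpleGraph.Walk.cons_isPath_iff, hbc.ne, hca.ne, (hab.ne : a ≠ b).symm]
    have hcyc : (SimpleGraph.Walk.cons hab
        (SimpleGraph.Walk.cons hbc (SimpleGraph.Walk.cons hca .nil))).IsCycle := by
      rw [SimpleGraph.Walk.cons_isCycle_iff]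
      refine ⟨hq, ?_⟩
      have h1 : a ≠ b := hab.ne
      have h2 : b ≠ c := hbc.ne
      have h3 : a ≠ c := fun h => hca.ne h.symm
      simp only [SimpleGraph.Walk.edges_cons, SimpleGraph.Walk.edges_nil, List.mem_cons,
        List.not_mem_nil, or_false, Sym2.eq_iff]
      tauto
    exact hac _ hcyc
  -- every vertex has a neighbor
  have hnbr : ∀ v : V, ∃ w, G.Adj v w := by
    intro v
    obtain ⟨u, hu⟩ : ∃ u : V, u ≠ v := by
      have h1 : 1 < Fintype.card V := hn
      obtain ⟨u, w, huw⟩ := Fintype.exists_pair_of_one_lt_card h1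
      rcases eq_or_ne u v with rfl | h
      · exact ⟨w, Ne.symm huw⟩
      · exact ⟨u, h⟩
    obtain ⟨p⟩ := hconn v u
    cases p with
    | nil => exact absurd rfl hu.symm
    | cons h _ => exact ⟨_, h⟩
  haveI hV : Nonempty V := Fintype.card_pos_iff.mp (by omega)
  -- the filtered set is {∅} ∪ singletons
  have hset : (nhdComplex G).filter
      (fun (A : Finset V) => A = ∅ ∨ (G.induce (A : Set V)).Connected)
      = insert ∅ (Finset.univ.image (fun v : V => {v})) := by
    ext A
    simp only [Finset.mem_filter, Finset.mem_insert, Finset.mem_image, Finset.mem_univ,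
      true_and, nhdComplex]
    constructor
    · rintro ⟨⟨v, hv⟩, hA⟩
      rcases hA with rfl | hA
      · exact Or.inl rfl
      · right
        -- A is nonempty
        obtain ⟨a⟩ := hA.nonempty
        refine ⟨(a : V), ?_⟩
        symm
        ext b
        simp only [Finset.mem_singleton]
        constructor
        · intro hb
          by_contra hne
          -- b ≠ a, both in A, connected induce gives a walk, hence an edge in A
          have hreach := hA.preconnected ⟨a, by simpa using a.2⟩
            ⟨b, by simpa using hb⟩
          obtain ⟨p⟩ := hreach
          have hne' : (⟨a, by simpa using a.2⟩ : (A : Set V)) ≠ ⟨b, by simpa using hb⟩ := by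
            simp only [ne_eq, Subtype.mk.injEq]
            exact fun h => hne h.symm
          have hadj := p.adj_snd (SimpleGraph.Walk.not_nil_of_ne hne')
          set y := p.getVert 1 with hy
          have hxy : G.Adj a y := by simpa using hadj
          have hyA : (y : V) ∈ A := by simpa using y.2
          have hx : (a : V) ∈ A := by simpa using a.2
          set x := (a : V)
          have hvx : G.Adj v x := by simpa using hv hx
          have hvy : G.Adj v (y : V) := by simpa using hv hyA
          exact htri v x y hvx hxy hvy.symm
        · rintro rfl; simpa using a.2
    · rintro (rfl | ⟨v, rfl⟩)
      · exact ⟨⟨Classical.arbitrary V, by simp⟩, Or.inl rfl⟩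
      · obtain ⟨w, hw⟩ := hnbr v
        refine ⟨⟨w, ?_⟩, Or.inr ?_⟩
        · intro x hx
          simp only [Finset.coe_singleton, Set.mem_singleton_iff] at hx
          subst hx
          simpa using hw.symm
        · haveI : Nonempty (↑(({v} : Finset V) : Set V)) := ⟨⟨v, by simp⟩⟩
          rw [SimpleGraph.connected_iff]
          refine ⟨?_, inferInstance⟩
          intro x y
          have : x = y := by
            apply Subtype.ext
            have hx := x.2; have hy := y.2
            simp only [Finset.coe_singleton, Set.mem_singleton_iff] at hx hy
            rw [hx, hy]
          rw [this]
  rw [connNbhdPoly, hset]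
  rw [Finset.sum_insert (by simp)]
  rw [Finset.sum_image (by intro a _ b _ h; simpa using h)]
  simp [nsmul_eq_mul]
end

section
/- Let G₁=(V₁,E₁) and G₂=(V₂,E₂) be vertex-disjoint finite simple graphs with V₁ and V₂ both nonempty. Then the connected neighborhood polynomial of their join satisfies N^{(c)}(G₁ + G₂, x) = 1 + S(G₁,x) + S(G₂,x) + (N(G₁,x) − 1)·((1+x)^{|V₂|} − 1) + (N(G₂,x) − 1)·((1+x)^{|V₁|} − 1) − (N(G₁,x) − 1)·(N(G₂,x) − 1), where the leading 1 accounts for the empty set. -/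
open Finset Polynomial

/-- The neighborhood polynomial of `G`. -/
noncomputable def nbhdPoly {V : Type*} [Fintype V] (G : SimpleGraph V) : Polynomial ℤ :=
  ∑ A ∈ nhdComplex G, X ^ A.card

open scoped Classical in
/-- The subgraph polynomial of `G`: the generating function of the nonempty vertex
subsets of `G` inducing a connected subgraph. -/
noncomputable def subgraphPoly {V : Type*} [Fintype V] (G : SimpleGraph V) : Polynomial ℤ :=
  ∑ A ∈ Finset.univ.filter
      (fun (A : Finset V) => A ≠ ∅ ∧ (G.induce (A : Set V)).Connected), X ^ A.card

open scoped Classical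

section Aux

variable {V₁ V₂ : Type*} (G₁ : SimpleGraph V₁) (G₂ : SimpleGraph V₂)

lemma jll (a b : V₁) : (G₁.graphJoin G₂).Adj (Sum.inl a) (Sum.inl b) ↔ G₁.Adj a b := by
  simp [SimpleGraph.graphJoin]
lemma jlr (a : V₁) (b : V₂) : (G₁.graphJoin G₂).Adj (Sum.inl a) (Sum.inr b) := by
  simp [SimpleGraph.graphJoin]
lemma jrl (a : V₁) (b : V₂) : (G₁.graphJoin G₂).Adj (Sum.inr b) (Sum.inl a) := by
  simp [SimpleGraph.graphJoin]
lemma jrr (a b : V₂) : (G₁.graphJoin G₂).Adj (Sum.inr a) (Sum.inr b) ↔ G₂.Adj a b := by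
  simp [SimpleGraph.graphJoin]

lemma empty_mem_nhdComplex {V : Type*} [Fintype V] [Nonempty V] (G : SimpleGraph V) :
    (∅ : Finset V) ∈ nhdComplex G := by
  simp only [nhdComplex, Finset.mem_filter, Finset.mem_univ, true_and]
  exact ⟨Classical.arbitrary V, by simp⟩

variable [Fintype V₁] [Fintype V₂]

lemma mem_join_complex (s : Finset V₁) (t : Finset V₂) :
    s.disjSum t ∈ nhdComplex (G₁.graphJoin G₂) ↔
      s ∈ nhdComplex G₁ ∨ t ∈ nhdComplex G₂ := by
  simp only [nhdComplex, Finset.mem_filter, Finset.mem_univ, true_and]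
  constructor
  · rintro ⟨v, hv⟩
    cases v with
    | inl v =>
      refine Or.inl ⟨v, fun a ha => ?_⟩
      have : (Sum.inl a : V₁ ⊕ V₂) ∈ (↑(s.disjSum t) : Set (V₁ ⊕ V₂)) := by
        simpa [Finset.inl_mem_disjSum] using ha
      have h2 := hv this
      simpa [SimpleGraph.mem_neighborSet, jll] using h2
    | inr v =>
      refine Or.inr ⟨v, fun b hb => ?_⟩
      have : (Sum.inr b : V₁ ⊕ V₂) ∈ (↑(s.disjSum t) : Set (V₁ ⊕ V₂)) := by
        simpa [Finset.inr_mem_disjSum] using hb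
      have h2 := hv this
      simpa [SimpleGraph.mem_neighborSet, jrr] using h2
  · rintro (⟨v, hv⟩ | ⟨v, hv⟩)
    · refine ⟨Sum.inl v, fun x hx => ?_⟩
      have hx' : x ∈ s.disjSum t := hx
      rw [Finset.mem_disjSum] at hx'
      rcases hx' with ⟨a, ha, rfl⟩ | ⟨b, hb, rfl⟩
      · have := hv ha
        simpa [SimpleGraph.mem_neighborSet, jll] using this
      · simpa [SimpleGraph.mem_neighborSet] using jlr G₁ G₂ v b
    · refine ⟨Sum.inr v, fun x hx => ?_⟩
      have hx' : x ∈ s.disjSum t := hx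
      rw [Finset.mem_disjSum] at hx'
      rcases hx' with ⟨a, ha, rfl⟩ | ⟨b, hb, rfl⟩
      · simpa [SimpleGraph.mem_neighborSet] using jrl G₁ G₂ a v
      · have := hv hb
        simpa [SimpleGraph.mem_neighborSet, jrr] using this

lemma conn_both (s : Finset V₁) (t : Finset V₂) (hs : s.Nonempty) (ht : t.Nonempty) :
    ((G₁.graphJoin G₂).induce (↑(s.disjSum t) : Set (V₁ ⊕ V₂))).Connected := by
  obtain ⟨a, ha⟩ := hs
  obtain ⟨b, hb⟩ := ht
  have hbmem : (Sum.inr b : V₁ ⊕ V₂) ∈ (↑(s.disjSum t) : Set (V₁ ⊕ V₂)) := by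
    simp [Finset.inr_mem_disjSum, hb]
  have hamem : (Sum.inl a : V₁ ⊕ V₂) ∈ (↑(s.disjSum t) : Set (V₁ ⊕ V₂)) := by
    simp [Finset.inl_mem_disjSum, ha]
  set w : (↑(s.disjSum t) : Set (V₁ ⊕ V₂)) := ⟨Sum.inr b, hbmem⟩ with hw
  set z : (↑(s.disjSum t) : Set (V₁ ⊕ V₂)) := ⟨Sum.inl a, hamem⟩ with hz
  have key : ∀ x : (↑(s.disjSum t) : Set (V₁ ⊕ V₂)),
      ((G₁.graphJoin G₂).induce (↑(s.disjSum t) : Set (V₁ ⊕ V₂))).Reachable x w := by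
    rintro ⟨x, hx⟩
    cases x with
    | inl x =>
      exact SimpleGraph.Adj.reachable (by simpa [SimpleGraph.comap_adj] using jlr G₁ G₂ x b)
    | inr x =>
      have h1 : ((G₁.graphJoin G₂).induce (↑(s.disjSum t) : Set (V₁ ⊕ V₂))).Adj ⟨Sum.inr x, hx⟩ z :=
        by simpa [SimpleGraph.comap_adj] using jrl G₁ G₂ a x
      have h2 : ((G₁.graphJoin G₂).induce (↑(s.disjSum t) : Set (V₁ ⊕ V₂))).Adj z w :=
        by simpa [SimpleGraph.comap_adj] using jlr G₁ G₂ a b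
      exact h1.reachable.trans h2.reachable
  rw [SimpleGraph.connected_iff]
  exact ⟨fun x y => (key x).trans (key y).symm, ⟨w⟩⟩

lemma left_set_eq (s : Finset V₁) :
    (↑(s.disjSum (∅ : Finset V₂)) : Set (V₁ ⊕ V₂)) = Sum.inl '' ↑s := by
  ext x; cases x <;> simp [Finset.mem_disjSum]

lemma right_set_eq (t : Finset V₂) :
    (↑((∅ : Finset V₁).disjSum t) : Set (V₁ ⊕ V₂)) = Sum.inr '' ↑t := by
  ext x; cases x <;> simp [Finset.mem_disjSum]

lemma conn_left (s : Finset V₁) :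
    ((G₁.graphJoin G₂).induce (↑(s.disjSum (∅ : Finset V₂)) : Set (V₁ ⊕ V₂))).Connected ↔
      (G₁.induce (↑s : Set V₁)).Connected := by
  rw [left_set_eq]
  refine (SimpleGraph.Iso.connected_iff
    (⟨Equiv.Set.image Sum.inl (↑s : Set V₁) Sum.inl_injective, ?_⟩ :
      G₁.induce (↑s : Set V₁) ≃g (G₁.graphJoin G₂).induce (Sum.inl '' ↑s))).symm
  rintro ⟨a, ha⟩ ⟨b, hb⟩
  exact jll G₁ G₂ a b

lemma conn_right (t : Finset V₂) :
    ((G₁.graphJoin G₂).induce (↑((∅ : Finset V₁).disjSum t) : Set (V₁ ⊕ V₂))).Connected ↔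
      (G₂.induce (↑t : Set V₂)).Connected := by
  rw [right_set_eq]
  refine (SimpleGraph.Iso.connected_iff
    (⟨Equiv.Set.image Sum.inr (↑t : Set V₂) Sum.inr_injective, ?_⟩ :
      G₂.induce (↑t : Set V₂) ≃g (G₁.graphJoin G₂).induce (Sum.inr '' ↑t))).symm
  rintro ⟨a, ha⟩ ⟨b, hb⟩
  exact jrr G₁ G₂ a b

end Aux

/-- The connected neighborhood polynomial of the join of two nonempty graphs. -/
theorem connNbhdPoly_join {V₁ V₂ : Type*} [Fintype V₁] [Fintype V₂]
    [Nonempty V₁] [Nonempty V₂] (G₁ : SimpleGraph V₁) (G₂ : SimpleGraph V₂) :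
    connNbhdPoly (G₁.graphJoin G₂) =
      1 + subgraphPoly G₁ + subgraphPoly G₂
        + (nbhdPoly G₁ - 1) * ((1 + X) ^ Fintype.card V₂ - 1)
        + (nbhdPoly G₂ - 1) * ((1 + X) ^ Fintype.card V₁ - 1)
        - (nbhdPoly G₁ - 1) * (nbhdPoly G₂ - 1) := by
  classical
  -- Step 1: reindex over pairs
  have step1 : connNbhdPoly (G₁.graphJoin G₂) =
      ∑ p ∈ (univ ×ˢ univ : Finset (Finset V₁ × Finset V₂)).filter
        (fun p => (p.1.disjSum p.2 ∈ nhdComplex (G₁.graphJoin G₂)) ∧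
          (p.1.disjSum p.2 = ∅ ∨
            ((G₁.graphJoin G₂).induce (↑(p.1.disjSum p.2) : Set (V₁ ⊕ V₂))).Connected)),
        (X : Polynomial ℤ) ^ (p.1.card + p.2.card) := by
    rw [connNbhdPoly]
    refine Finset.sum_bij' (fun A _ => (A.toLeft, A.toRight))
      (fun p _ => p.1.disjSum p.2) ?_ ?_ ?_ ?_ ?_
    · intro A hA
      simp only [Finset.mem_filter] at hA
      simp only [Finset.mem_filter, Finset.mem_product, Finset.mem_univ, true_and,
        Finset.toLeft_disjSum_toRight]
      refine ⟨hA.1, ?_⟩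
      rw [Finset.toLeft_disjSum_toRight]
      exact hA.2
    · intro p hp
      simp only [Finset.mem_filter, Finset.mem_product, Finset.mem_univ, true_and] at hp
      simp only [Finset.mem_filter]
      exact hp
    · intro A hA
      exact Finset.toLeft_disjSum_toRight
    · intro p hp
      exact Prod.ext (Finset.toLeft_disjSum) (Finset.toRight_disjSum)
    · intro A hA
      rw [← Finset.card_toLeft_add_card_toRight]
  -- Step 2: rewrite the predicate
  have step2 : ((univ ×ˢ univ : Finset (Finset V₁ × Finset V₂)).filter
        (fun p => (p.1.disjSum p.2 ∈ nhdComplex (G₁.graphJoin G₂)) ∧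
          (p.1.disjSum p.2 = ∅ ∨
            ((G₁.graphJoin G₂).induce (↑(p.1.disjSum p.2) : Set (V₁ ⊕ V₂))).Connected))) =
      ((univ ×ˢ univ : Finset (Finset V₁ × Finset V₂)).filter
        (fun p => (p.1 = ∅ ∧ p.2 = ∅) ∨
          ((p.1 ≠ ∅ ∧ (G₁.induce (↑p.1 : Set V₁)).Connected) ∧ p.2 = ∅) ∨
          (p.1 = ∅ ∧ (p.2 ≠ ∅ ∧ (G₂.induce (↑p.2 : Set V₂)).Connected)) ∨
          (p.1 ≠ ∅ ∧ p.2 ≠ ∅ ∧ (p.1 ∈ nhdComplex G₁ ∨ p.2 ∈ nhdComplex G₂)))) := by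
    apply Finset.filter_congr
    rintro ⟨s, t⟩ -
    by_cases hs : s = ∅ <;> by_cases ht : t = ∅
    · subst hs; subst ht
      simp [Finset.disjSum_eq_empty, mem_join_complex, empty_mem_nhdComplex]
    · subst hs
      have hc := conn_right G₁ G₂ t
      have hm := mem_join_complex G₁ G₂ ∅ t
      simp only [hm, Finset.disjSum_eq_empty, hc]
      simp [ht, empty_mem_nhdComplex]
    · subst ht
      have hc := conn_left G₁ G₂ s
      have hm := mem_join_complex G₁ G₂ s ∅
      simp only [hm, Finset.disjSum_eq_empty, hc]
      simp [hs, empty_mem_nhdComplex]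
    · have hc := conn_both G₁ G₂ s t (Finset.nonempty_iff_ne_empty.2 hs)
        (Finset.nonempty_iff_ne_empty.2 ht)
      have hm := mem_join_complex G₁ G₂ s t
      simp only [hm, Finset.disjSum_eq_empty, hc]
      simp [hs, ht]
  rw [step1, step2]
  -- product-sum lemma
  have prodSum : ∀ (S₁ : Finset (Finset V₁)) (S₂ : Finset (Finset V₂)),
      ∑ p ∈ S₁ ×ˢ S₂, (X : Polynomial ℤ) ^ (p.1.card + p.2.card)
        = (∑ s ∈ S₁, (X : Polynomial ℤ) ^ s.card) * (∑ t ∈ S₂, (X : Polynomial ℤ) ^ t.card) := by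
    intro S₁ S₂
    rw [Finset.sum_mul_sum, Finset.sum_product]
    simp [pow_add]
  -- Step 3: split into four parts
  have step3 : (∑ p ∈ ((univ ×ˢ univ : Finset (Finset V₁ × Finset V₂)).filter
        (fun p => (p.1 = ∅ ∧ p.2 = ∅) ∨
          ((p.1 ≠ ∅ ∧ (G₁.induce (↑p.1 : Set V₁)).Connected) ∧ p.2 = ∅) ∨
          (p.1 = ∅ ∧ (p.2 ≠ ∅ ∧ (G₂.induce (↑p.2 : Set V₂)).Connected)) ∨
          (p.1 ≠ ∅ ∧ p.2 ≠ ∅ ∧ (p.1 ∈ nhdComplex G₁ ∨ p.2 ∈ nhdComplex G₂)))),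
        (X : Polynomial ℤ) ^ (p.1.card + p.2.card))
      = (∑ p ∈ ((univ ×ˢ univ : Finset (Finset V₁ × Finset V₂)).filter
          (fun p => p.1 = ∅ ∧ p.2 = ∅)), (X : Polynomial ℤ) ^ (p.1.card + p.2.card))
        + (∑ p ∈ ((univ ×ˢ univ : Finset (Finset V₁ × Finset V₂)).filter
          (fun p => (p.1 ≠ ∅ ∧ (G₁.induce (↑p.1 : Set V₁)).Connected) ∧ p.2 = ∅)),
            (X : Polynomial ℤ) ^ (p.1.card + p.2.card))
        + (∑ p ∈ ((univ ×ˢ univ : Finset (Finset V₁ × Finset V₂)).filter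
          (fun p => p.1 = ∅ ∧ (p.2 ≠ ∅ ∧ (G₂.induce (↑p.2 : Set V₂)).Connected))),
            (X : Polynomial ℤ) ^ (p.1.card + p.2.card))
        + (∑ p ∈ ((univ ×ˢ univ : Finset (Finset V₁ × Finset V₂)).filter
          (fun p => p.1 ≠ ∅ ∧ p.2 ≠ ∅ ∧ (p.1 ∈ nhdComplex G₁ ∨ p.2 ∈ nhdComplex G₂))),
            (X : Polynomial ℤ) ^ (p.1.card + p.2.card)) := by
    rw [Finset.sum_filter, Finset.sum_filter, Finset.sum_filter, Finset.sum_filter,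
      Finset.sum_filter, ← Finset.sum_add_distrib, ← Finset.sum_add_distrib,
      ← Finset.sum_add_distrib]
    refine Finset.sum_congr rfl fun p _ => ?_
    by_cases h1 : p.1 = ∅ <;> by_cases h2 : p.2 = ∅ <;> simp [h1, h2]
  rw [step3]
  -- evaluate the four pieces
  have e0 : (∑ p ∈ ((univ ×ˢ univ : Finset (Finset V₁ × Finset V₂)).filter
      (fun p => p.1 = ∅ ∧ p.2 = ∅)), (X : Polynomial ℤ) ^ (p.1.card + p.2.card)) = 1 := by
    have h : ((univ ×ˢ univ : Finset (Finset V₁ × Finset V₂)).filter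
        (fun p => p.1 = ∅ ∧ p.2 = ∅)) = {((∅ : Finset V₁), (∅ : Finset V₂))} := by
      ext p
      simp [Finset.mem_filter, Finset.mem_product, Prod.ext_iff]
    rw [h]
    simp
  have e1 : (∑ p ∈ ((univ ×ˢ univ : Finset (Finset V₁ × Finset V₂)).filter
      (fun p => (p.1 ≠ ∅ ∧ (G₁.induce (↑p.1 : Set V₁)).Connected) ∧ p.2 = ∅)),
        (X : Polynomial ℤ) ^ (p.1.card + p.2.card)) = subgraphPoly G₁ := by
    have hfe : ((univ ×ˢ univ : Finset (Finset V₁ × Finset V₂)).filter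
        (fun p => (p.1 ≠ ∅ ∧ (G₁.induce (↑p.1 : Set V₁)).Connected) ∧ p.2 = ∅))
        = (univ.filter (fun s : Finset V₁ => s ≠ ∅ ∧ (G₁.induce (↑s : Set V₁)).Connected)) ×ˢ
          (univ.filter (fun t : Finset V₂ => t = ∅)) := by
      ext x; simp [Finset.mem_product]
    rw [hfe, prodSum]
    have h2 : (univ : Finset (Finset V₂)).filter (fun t => t = ∅) = {∅} := by
      ext t; simp
    rw [h2, subgraphPoly]
    simp
  have e2 : (∑ p ∈ ((univ ×ˢ univ : Finset (Finset V₁ × Finset V₂)).filter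
      (fun p => p.1 = ∅ ∧ (p.2 ≠ ∅ ∧ (G₂.induce (↑p.2 : Set V₂)).Connected))),
        (X : Polynomial ℤ) ^ (p.1.card + p.2.card)) = subgraphPoly G₂ := by
    have hfe : ((univ ×ˢ univ : Finset (Finset V₁ × Finset V₂)).filter
        (fun p => p.1 = ∅ ∧ (p.2 ≠ ∅ ∧ (G₂.induce (↑p.2 : Set V₂)).Connected)))
        = (univ.filter (fun s : Finset V₁ => s = ∅)) ×ˢ
          (univ.filter (fun t : Finset V₂ => t ≠ ∅ ∧ (G₂.induce (↑t : Set V₂)).Connected)) := by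
      ext x; simp [Finset.mem_product, and_assoc]
    rw [hfe, prodSum]
    have h2 : (univ : Finset (Finset V₁)).filter (fun t => t = ∅) = {∅} := by
      ext t; simp
    rw [h2, subgraphPoly]
    simp
  -- polynomial identities
  have hN1 : (∑ s ∈ (univ : Finset (Finset V₁)).filter
      (fun s => s ∈ nhdComplex G₁ ∧ s ≠ ∅), (X : Polynomial ℤ) ^ s.card)
      = nbhdPoly G₁ - 1 := by
    have hfe : (univ : Finset (Finset V₁)).filter (fun s => s ∈ nhdComplex G₁ ∧ s ≠ ∅)
        = (nhdComplex G₁).erase ∅ := by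
      ext s
      simp only [Finset.mem_filter, Finset.mem_univ, true_and, Finset.mem_erase]
      tauto
    rw [hfe, eq_sub_iff_add_eq, nbhdPoly]
    simpa using Finset.sum_erase_add (nhdComplex G₁)
      (fun A => (X : Polynomial ℤ) ^ A.card) (empty_mem_nhdComplex G₁)
  have hN2 : (∑ s ∈ (univ : Finset (Finset V₂)).filter
      (fun s => s ∈ nhdComplex G₂ ∧ s ≠ ∅), (X : Polynomial ℤ) ^ s.card)
      = nbhdPoly G₂ - 1 := by
    have hfe : (univ : Finset (Finset V₂)).filter (fun s => s ∈ nhdComplex G₂ ∧ s ≠ ∅)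
        = (nhdComplex G₂).erase ∅ := by
      ext s
      simp only [Finset.mem_filter, Finset.mem_univ, true_and, Finset.mem_erase]
      tauto
    rw [hfe, eq_sub_iff_add_eq, nbhdPoly]
    simpa using Finset.sum_erase_add (nhdComplex G₂)
      (fun A => (X : Polynomial ℤ) ^ A.card) (empty_mem_nhdComplex G₂)
  have hB1 : (∑ t ∈ (univ : Finset (Finset V₁)).filter (fun t => t ≠ ∅),
      (X : Polynomial ℤ) ^ t.card) = (1 + X) ^ Fintype.card V₁ - 1 := by
    have hpow : ((1 + X : Polynomial ℤ)) ^ Fintype.card V₁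
        = ∑ t : Finset V₁, (X : Polynomial ℤ) ^ t.card := by
      rw [add_comm, ← Finset.card_univ, ← Finset.prod_const, Finset.prod_add]
      simp
    have hfe : (univ : Finset (Finset V₁)).filter (fun t => t ≠ ∅)
        = (univ : Finset (Finset V₁)).erase ∅ := by
      ext t; simp
    rw [hfe, eq_sub_iff_add_eq, hpow]
    simpa using Finset.sum_erase_add (univ : Finset (Finset V₁))
      (fun t => (X : Polynomial ℤ) ^ t.card) (Finset.mem_univ ∅)
  have hB2 : (∑ t ∈ (univ : Finset (Finset V₂)).filter (fun t => t ≠ ∅),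
      (X : Polynomial ℤ) ^ t.card) = (1 + X) ^ Fintype.card V₂ - 1 := by
    have hpow : ((1 + X : Polynomial ℤ)) ^ Fintype.card V₂
        = ∑ t : Finset V₂, (X : Polynomial ℤ) ^ t.card := by
      rw [add_comm, ← Finset.card_univ, ← Finset.prod_const, Finset.prod_add]
      simp
    have hfe : (univ : Finset (Finset V₂)).filter (fun t => t ≠ ∅)
        = (univ : Finset (Finset V₂)).erase ∅ := by
      ext t; simp
    rw [hfe, eq_sub_iff_add_eq, hpow]
    simpa using Finset.sum_erase_add (univ : Finset (Finset V₂))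
      (fun t => (X : Polynomial ℤ) ^ t.card) (Finset.mem_univ ∅)
  -- evaluate piece 3
  have e3 : (∑ p ∈ ((univ ×ˢ univ : Finset (Finset V₁ × Finset V₂)).filter
      (fun p => p.1 ≠ ∅ ∧ p.2 ≠ ∅ ∧ (p.1 ∈ nhdComplex G₁ ∨ p.2 ∈ nhdComplex G₂))),
        (X : Polynomial ℤ) ^ (p.1.card + p.2.card))
      = (nbhdPoly G₁ - 1) * ((1 + X) ^ Fintype.card V₂ - 1)
        + (nbhdPoly G₂ - 1) * ((1 + X) ^ Fintype.card V₁ - 1)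
        - (nbhdPoly G₁ - 1) * (nbhdPoly G₂ - 1) := by
    have hcong : ((univ ×ˢ univ : Finset (Finset V₁ × Finset V₂)).filter
        (fun p => p.1 ≠ ∅ ∧ p.2 ≠ ∅ ∧ (p.1 ∈ nhdComplex G₁ ∨ p.2 ∈ nhdComplex G₂)))
        = ((univ ×ˢ univ : Finset (Finset V₁ × Finset V₂)).filter
          (fun p => ((p.1 ∈ nhdComplex G₁ ∧ p.1 ≠ ∅) ∧ p.2 ≠ ∅) ∨
            (p.1 ≠ ∅ ∧ (p.2 ∈ nhdComplex G₂ ∧ p.2 ≠ ∅)))) := by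
      apply Finset.filter_congr
      rintro ⟨s, t⟩ -
      constructor
      · rintro ⟨hs, ht, h | h⟩
        · exact Or.inl ⟨⟨h, hs⟩, ht⟩
        · exact Or.inr ⟨hs, h, ht⟩
      · rintro (⟨⟨h, hs⟩, ht⟩ | ⟨hs, h, ht⟩)
        · exact ⟨hs, ht, Or.inl h⟩
        · exact ⟨hs, ht, Or.inr h⟩
    rw [hcong]
    have hsum := Finset.sum_union_inter
      (s₁ := (univ ×ˢ univ : Finset (Finset V₁ × Finset V₂)).filter
        (fun p => (p.1 ∈ nhdComplex G₁ ∧ p.1 ≠ ∅) ∧ p.2 ≠ ∅))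
      (s₂ := (univ ×ˢ univ : Finset (Finset V₁ × Finset V₂)).filter
        (fun p => p.1 ≠ ∅ ∧ (p.2 ∈ nhdComplex G₂ ∧ p.2 ≠ ∅)))
      (f := fun p => (X : Polynomial ℤ) ^ (p.1.card + p.2.card))
    rw [← Finset.filter_or, ← Finset.filter_and] at hsum
    have hAB : ((univ ×ˢ univ : Finset (Finset V₁ × Finset V₂)).filter
        (fun p => ((p.1 ∈ nhdComplex G₁ ∧ p.1 ≠ ∅) ∧ p.2 ≠ ∅) ∧
          (p.1 ≠ ∅ ∧ (p.2 ∈ nhdComplex G₂ ∧ p.2 ≠ ∅))))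
        = ((univ ×ˢ univ : Finset (Finset V₁ × Finset V₂)).filter
          (fun p => (p.1 ∈ nhdComplex G₁ ∧ p.1 ≠ ∅) ∧ (p.2 ∈ nhdComplex G₂ ∧ p.2 ≠ ∅))) := by
      apply Finset.filter_congr
      rintro ⟨s, t⟩ -
      constructor
      · rintro ⟨⟨h1, h2⟩, h3, h4⟩
        exact ⟨h1, h4⟩
      · rintro ⟨⟨h1, h2⟩, h3, h4⟩
        exact ⟨⟨⟨h1, h2⟩, h4⟩, h2, h3, h4⟩
    rw [hAB] at hsum
    have hgoal := eq_sub_of_add_eq hsum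
    rw [hgoal]
    have hfeA : ((univ ×ˢ univ : Finset (Finset V₁ × Finset V₂)).filter
        (fun p => (p.1 ∈ nhdComplex G₁ ∧ p.1 ≠ ∅) ∧ p.2 ≠ ∅))
        = (univ.filter (fun s : Finset V₁ => s ∈ nhdComplex G₁ ∧ s ≠ ∅)) ×ˢ
          (univ.filter (fun t : Finset V₂ => t ≠ ∅)) := by
      ext x; simp [Finset.mem_product]
    have hfeB : ((univ ×ˢ univ : Finset (Finset V₁ × Finset V₂)).filter
        (fun p => p.1 ≠ ∅ ∧ (p.2 ∈ nhdComplex G₂ ∧ p.2 ≠ ∅)))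
        = (univ.filter (fun s : Finset V₁ => s ≠ ∅)) ×ˢ
          (univ.filter (fun t : Finset V₂ => t ∈ nhdComplex G₂ ∧ t ≠ ∅)) := by
      ext x; simp [Finset.mem_product, and_assoc]
    have hfeC : ((univ ×ˢ univ : Finset (Finset V₁ × Finset V₂)).filter
        (fun p => (p.1 ∈ nhdComplex G₁ ∧ p.1 ≠ ∅) ∧ (p.2 ∈ nhdComplex G₂ ∧ p.2 ≠ ∅)))
        = (univ.filter (fun s : Finset V₁ => s ∈ nhdComplex G₁ ∧ s ≠ ∅)) ×ˢ
          (univ.filter (fun t : Finset V₂ => t ∈ nhdComplex G₂ ∧ t ≠ ∅)) := by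
      ext x; simp [Finset.mem_product]
    rw [hfeA, hfeB, hfeC, prodSum, prodSum, prodSum, hN1, hN2, hB1, hB2]
    ring
  rw [e0, e1, e2, e3]
  ring
end

section
/- Let G=(V,E) be a finite simple graph of order n and let Ḡ denote its complement. Then the domination polynomial of G and the neighborhood polynomial of Ḡ satisfy D(G,x) + N(Ḡ,x) = (1+x)^n. -/
open Finset Polynomial

open scoped Classical in
/-- The domination polynomial of `G`: the generating function of the dominating sets
of `G`, i.e. the sets `W` with `N[W] = V`. -/
noncomputable def domPoly {V : Type*} [Fintype V] (G : SimpleGraph V) : Polynomial ℤ :=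
  ∑ W ∈ Finset.univ.filter
      (fun (W : Finset V) => ∀ v : V, v ∈ W ∨ ∃ w ∈ W, G.Adj w v), X ^ W.card

open scoped Classical in
lemma mem_nhdComplex_compl_iff {V : Type*} [Fintype V] (G : SimpleGraph V) (W : Finset V) :
    W ∈ nhdComplex Gᶜ ↔ ¬ (∀ v : V, v ∈ W ∨ ∃ w ∈ W, G.Adj w v) := by
  simp only [nhdComplex, Finset.mem_filter, Finset.mem_univ, true_and]
  constructor
  · rintro ⟨v, hv⟩
    push_neg
    refine ⟨v, ?_, ?_⟩
    · intro hvW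
      have := hv hvW
      simp [SimpleGraph.neighborSet] at this
    · intro w hw
      have := hv hw
      simp only [SimpleGraph.mem_neighborSet, SimpleGraph.compl_adj] at this
      intro hadj
      exact this.2 hadj.symm
  · intro h
    push_neg at h
    obtain ⟨v, hvW, hadj⟩ := h
    refine ⟨v, fun w hw => ?_⟩
    simp only [SimpleGraph.mem_neighborSet, SimpleGraph.compl_adj]
    exact ⟨fun hvw => hvW (hvw ▸ hw), fun hvw => hadj w hw hvw.symm⟩

/-- The domination polynomial of `G` and the neighborhood polynomial of the complement
of `G` satisfy `D(G,x) + N(Ḡ,x) = (1+x)^n`. -/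
theorem domPoly_add_nbhdPoly_compl {V : Type*} [Fintype V] (G : SimpleGraph V) (n : ℕ)
    (hcard : Fintype.card V = n) :
    domPoly G + nbhdPoly Gᶜ = (1 + X) ^ n := by
  classical
  rw [domPoly, nbhdPoly]
  have hset : nhdComplex Gᶜ =
      Finset.univ.filter (fun (W : Finset V) =>
        ¬ ∀ v : V, v ∈ W ∨ ∃ w ∈ W, G.Adj w v) := by
    ext W
    simp [mem_nhdComplex_compl_iff, Finset.mem_filter]
  rw [hset, Finset.sum_filter_add_sum_filter_not Finset.univ
      (fun (W : Finset V) => ∀ v : V, v ∈ W ∨ ∃ w ∈ W, G.Adj w v) (fun W => X ^ W.card)]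
  have key : ∑ W : Finset V, (X : Polynomial ℤ) ^ W.card = (1 + X) ^ Fintype.card V := by
    have := Finset.prod_add (fun _ : V => (X : Polynomial ℤ)) (fun _ : V => (1 : Polynomial ℤ))
      Finset.univ
    simp only [Finset.prod_const, Finset.prod_const, mul_one, one_pow] at this
    rw [add_comm (X : Polynomial ℤ) 1] at this
    rw [← Finset.card_univ, this, Finset.powerset_univ]
  rw [key, hcard]
end
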